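/- Every valuation domain that is not a field and is radically finite is a discrete valuation ring. -/

import Mathlib

/-- The height of an ideal `I`: the infimum of the heights (in the prime spectrum)
of the prime ideals containing `I`. -/
noncomputable def idealHeight (R : Type*) [CommRing R] (I : Ideal R) : ℕ∞ :=
  ⨅ P : {P : PrimeSpectrum R // I ≤ P.asIdeal}, Order.height P.1

/-- An ideal `I` is radically perfect if its height equals the least number `n` such that
`√I` is the radical of an ideal generated by `n` elements, and moreover, if `ht I = 0`,
then `√I` is the radical of a principal ideal generated by a zero divisor. -/
def RadicallyPerfect {R : Type*} [CommRing R] (I : Ideal R) : Prop :=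
  idealHeight R I = sInf {n : ℕ∞ | ∃ s : Finset R,
      (s.card : ℕ∞) = n ∧ (Ideal.span (s : Set R)).radical = I.radical} ∧
    (idealHeight R I = 0 → ∃ θ : R, θ ∉ nonZeroDivisors R ∧
      I.radical = (Ideal.span {θ} : Ideal R).radical)

/-- The set of ideals of `R` generated by `ht P` elements whose radical equals `P`. -/
def genHtRad {R : Type*} [CommRing R] (P : Ideal R) : Set (Ideal R) :=
  {A | ∃ s : Finset R, (s.card : ℕ∞) = idealHeight R P ∧
    Ideal.span (s : Set R) = A ∧ A.radical = P}

/-- A commutative ring `R` is radically finite if every prime ideal `P` of `R` is radically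
perfect, the set of ideals generated by `ht P` elements with radical `P` has a maximal
member `A`, and every chain of ideals between `A` and `P` is finite. -/
def RadicallyFinite (R : Type*) [CommRing R] : Prop :=
  ∀ P : Ideal R, P.IsPrime → RadicallyPerfect P ∧
    ∃ A ∈ genHtRad P, (∀ B ∈ genHtRad P, A ≤ B → B = A) ∧
      ∀ C : Set (Ideal R), IsChain (· ≤ ·) C → C ⊆ Set.Icc A P → C.Finite

/-- A ring is of finite character if each nonzero element lies in only finitely many
maximal ideals. -/
def FiniteCharacter (R : Type*) [CommRing R] : Prop :=
  ∀ x : R, x ≠ 0 → {M : Ideal R | M.IsMaximal ∧ x ∈ M}.Finite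

section helpers

variable {R : Type*} [CommRing R] [IsDomain R] [ValuationRing R]

lemma aux_ideal_total (I J : Ideal R) : I ≤ J ∨ J ≤ I := Std.Total.total I J

/-- If `a ∉ I` in a valuation ring, then `I ≤ (a)`. -/
lemma aux_span_le {a : R} {I : Ideal R} (h : a ∉ I) : I ≤ Ideal.span {a} := by
  rcases aux_ideal_total (Ideal.span {a}) I with h' | h'
  · exact absurd (h' (Ideal.mem_span_singleton_self a)) h
  · exact h'

end helpers

/-- Every valuation domain that is not a field and is radically finite is a DVR. -/
theorem radicallyFinite_valuationRing_dvr {R : Type*} [CommRing R] [IsDomain R]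
    [ValuationRing R] (hnf : ¬ IsField R) (hR : RadicallyFinite R) :
    IsDiscreteValuationRing R := by
  classical
  set M := IsLocalRing.maximalIdeal R with hMdef
  have hMne : M ≠ ⊥ := fun h =>
    hnf (IsLocalRing.isField_iff_maximalIdeal_eq.mpr h)
  -- apply radical finiteness to the maximal ideal
  obtain ⟨-, A, ⟨s, -, hsA, hArad⟩, -, hchain⟩ :=
    hR M (Ideal.IsMaximal.isPrime (IsLocalRing.maximalIdeal.isMaximal R))
  have hAM : A ≤ M := hArad ▸ Ideal.le_radical
  have hIcc : (Set.Icc A M).Finite :=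
    hchain _ (fun I _ J _ _ => aux_ideal_total I J) le_rfl
  -- the maximal ideal is finitely generated
  have hMfg : M.FG := by
    set S : Set (Ideal R) := (fun x => A ⊔ Ideal.span {x}) '' (M : Set R) with hSdef
    have hSsub : S ⊆ Set.Icc A M := by
      rintro _ ⟨x, hx, rfl⟩
      exact ⟨le_sup_left, sup_le hAM (Ideal.span_le.mpr (Set.singleton_subset_iff.mpr hx))⟩
    obtain ⟨B, hB, hBmax⟩ := (hIcc.subset hSsub).exists_maximalFor id S
      ⟨_, ⟨0, M.zero_mem, rfl⟩⟩
    obtain ⟨x₀, hx₀, rfl⟩ := hB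
    have hMeq : M = A ⊔ Ideal.span {x₀} := by
      refine le_antisymm ?_ (hSsub ⟨x₀, hx₀, rfl⟩).2
      intro y hy
      have h1 : A ⊔ Ideal.span {y} ∈ S := ⟨y, hy, rfl⟩
      have h2 : A ⊔ Ideal.span {y} ≤ A ⊔ Ideal.span {x₀} := by
        rcases aux_ideal_total (A ⊔ Ideal.span {y}) (A ⊔ Ideal.span {x₀}) with h | h
        · exact h
        · exact hBmax h1 h
      exact h2 (Ideal.mem_sup_right (Ideal.mem_span_singleton_self y))
    rw [hMeq]
    exact Submodule.FG.sup ⟨s, hsA⟩ ⟨{x₀}, by simp⟩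
  -- hence principal: M = (π)
  obtain ⟨π, hπ₀⟩ := (IsBezout.isPrincipal_of_FG M hMfg).principal
  have hπ : M = Ideal.span {π} := hπ₀
  clear hπ₀
  have hπ0 : π ≠ 0 := by
    rintro rfl
    exact hMne (by rw [hπ]; exact Ideal.span_singleton_eq_bot.mpr rfl)
  have hπmem : π ∈ M := by rw [hπ]; exact Ideal.mem_span_singleton_self π
  have hπu : ¬ IsUnit π := fun h => (IsLocalRing.maximalIdeal.isMaximal R).ne_top
    (Ideal.eq_top_of_isUnit_mem _ hπmem h)
  have hπirr : Irreducible π := by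
    refine ⟨hπu, fun a b hab => ?_⟩
    by_contra hc
    push_neg at hc
    have ha : a ∈ M := (IsLocalRing.mem_maximalIdeal a).mpr hc.1
    have hb : b ∈ M := (IsLocalRing.mem_maximalIdeal b).mpr hc.2
    rw [hπ, Ideal.mem_span_singleton] at ha hb
    obtain ⟨a', rfl⟩ := ha
    obtain ⟨b', rfl⟩ := hb
    have h0 : π * 1 = π * (π * (a' * b')) := by
      conv_lhs => rw [mul_one, hab]
      ring
    have h1 : (1 : R) = π * (a' * b') := mul_left_cancel₀ hπ0 h0
    exact hπu (IsUnit.of_mul_eq_one _ h1.symm)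
  -- the intersection of the powers of M
  set Q : Ideal R := ⨅ n : ℕ, Ideal.span {π ^ n} with hQdef
  have hQle : ∀ n : ℕ, Q ≤ Ideal.span {π ^ n} := fun n => iInf_le _ n
  have hQmem : ∀ {x : R}, x ∈ Q ↔ ∀ n : ℕ, x ∈ Ideal.span {π ^ n} := by
    intro x; exact Submodule.mem_iInf _
  -- no power of π lies in Q
  have hpow : ∀ m : ℕ, π ^ m ∉ Q := by
    intro m hm
    obtain ⟨e, he⟩ := Ideal.mem_span_singleton.mp (hQle (m + 1) hm)
    have h2 : π ^ m * 1 = π ^ m * (π * e) := by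
      nth_rewrite 1 [he]
      rw [pow_succ]; ring
    exact hπu (IsUnit.of_mul_eq_one _ (mul_left_cancel₀ (pow_ne_zero _ hπ0) h2).symm)
  by_cases hQ : Q = ⊥
  · -- rank one discrete: conclude via unit·πⁿ factorizations
    apply IsDiscreteValuationRing.ofHasUnitMulPowIrreducibleFactorization
    refine ⟨π, hπirr, ?_⟩
    intro x hx
    have hex : ∃ n, x ∉ Ideal.span {π ^ n} := by
      by_contra h
      push_neg at h
      exact hx (by have hx' := hQmem.mpr h; rw [hQ] at hx'; exact (Submodule.mem_bot R).mp hx')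
    obtain ⟨m, hn0, hnspec, hmem⟩ : ∃ m : ℕ, m ≠ 0 ∧ x ∉ Ideal.span {π ^ m} ∧
        x ∈ Ideal.span {π ^ (m - 1)} := by
      refine ⟨Nat.find hex, ?_, Nat.find_spec hex, ?_⟩
      · intro h0
        apply Nat.find_spec hex
        rw [h0, pow_zero, Ideal.span_singleton_one]
        exact Submodule.mem_top
      · by_contra h
        refine Nat.find_min hex (Nat.sub_lt (Nat.pos_of_ne_zero ?_) one_pos) h
        intro h0
        apply Nat.find_spec hex
        rw [h0, pow_zero, Ideal.span_singleton_one]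
        exact Submodule.mem_top
    obtain ⟨u, hxu⟩ := Ideal.mem_span_singleton.mp hmem
    have huu : IsUnit u := by
      by_contra hcu
      apply hnspec
      have hu : u ∈ M := (IsLocalRing.mem_maximalIdeal u).mpr hcu
      rw [hπ, Ideal.mem_span_singleton] at hu
      obtain ⟨t, rfl⟩ := hu
      rw [hxu, Ideal.mem_span_singleton]
      refine ⟨t, ?_⟩
      rw [← mul_assoc, ← pow_succ, Nat.sub_add_cancel (Nat.one_le_iff_ne_zero.mpr hn0)]
    exact ⟨m - 1, ⟨huu.unit, by rw [huu.unit_spec]; exact hxu.symm⟩⟩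
  · -- otherwise, derive a contradiction from the chain condition at the prime Q
    exfalso
    have hQprime : Q.IsPrime := by
      constructor
      · intro h
        exact hpow 1 (h ▸ Submodule.mem_top)
      · intro a b hab
        by_contra hc
        push_neg at hc
        obtain ⟨ha, hb⟩ := hc
        obtain ⟨s1, hs1⟩ : ∃ k, a ∉ Ideal.span {π ^ k} := by
          by_contra h; push_neg at h; exact ha (hQmem.mpr h)
        obtain ⟨t1, ht1⟩ : ∃ k, b ∉ Ideal.span {π ^ k} := by
          by_contra h; push_neg at h; exact hb (hQmem.mpr h)
        obtain ⟨c, hc1⟩ := Ideal.mem_span_singleton.mp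
          (aux_span_le hs1 (Ideal.mem_span_singleton_self _))
        obtain ⟨d, hd1⟩ := Ideal.mem_span_singleton.mp
          (aux_span_le ht1 (Ideal.mem_span_singleton_self _))
        apply hpow (s1 + t1)
        have heq : π ^ (s1 + t1) = a * b * (c * d) := by
          rw [pow_add, hc1, hd1]; ring
        rw [heq]
        exact Ideal.mul_mem_right _ _ hab
    obtain ⟨-, A', ⟨s', -, hs'A, hA'rad⟩, -, hchain'⟩ := hR Q hQprime
    obtain ⟨bgen, hbgen₀⟩ := (IsBezout.isPrincipal_of_FG A' ⟨s', hs'A⟩).principal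
    have hbgen : A' = Ideal.span {bgen} := hbgen₀
    clear hbgen₀
    have hbQ : bgen ∈ Q := hA'rad ▸ Ideal.le_radical
      (hbgen ▸ Ideal.mem_span_singleton_self bgen)
    have hb0 : bgen ≠ 0 := by
      rintro rfl
      apply hQ
      have hb' : A' = (⊥ : Ideal R) := by rw [hbgen]; exact Ideal.span_singleton_eq_bot.mpr rfl
      rw [← hA'rad, hb', Ideal.radical_bot_of_noZeroDivisors]
    have hbdvd : ∀ n : ℕ, ∃ y : R, bgen = π ^ n * y := fun n =>
      (Ideal.mem_span_singleton.mp (hQle n hbQ)).imp (fun y hy => hy)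
    choose y hy using hbdvd
    have hy0 : ∀ n, y n ≠ 0 := by
      intro n h
      apply hb0
      rw [hy n, h, mul_zero]
    have hstep : ∀ n, y n = π * y (n + 1) := by
      intro n
      apply mul_left_cancel₀ (pow_ne_zero n hπ0)
      rw [← hy n, ← mul_assoc, ← pow_succ, ← hy (n + 1)]
    have hmono : ∀ n, Ideal.span {y n} ≤ Ideal.span {y (n + 1)} := by
      intro n
      rw [Ideal.span_singleton_le_span_singleton]
      exact ⟨π, by rw [hstep n]; ring⟩
    have hstrict : ∀ n, y (n + 1) ∉ Ideal.span {y n} := by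
      intro n hmem
      rw [Ideal.mem_span_singleton] at hmem
      obtain ⟨c, hc⟩ := hmem
      rw [hstep n] at hc
      have h1 : y (n + 1) * 1 = y (n + 1) * (π * c) := by
        nth_rewrite 1 [hc]
        ring
      have h2 := mul_left_cancel₀ (hy0 (n + 1)) h1
      exact hπu (IsUnit.of_mul_eq_one _ h2.symm)
    have hyQ : ∀ n, y n ∈ Q := by
      intro n
      rw [hQmem]
      intro k
      by_contra hk
      obtain ⟨c, hc⟩ := Ideal.mem_span_singleton.mp
        (aux_span_le hk (Ideal.mem_span_singleton_self _))
      apply hpow (n + k)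
      have heq : π ^ (n + k) = bgen * c := by
        rw [pow_add, hc, hy n]; ring
      rw [heq]
      exact Ideal.mul_mem_right _ _ hbQ
    have hAy : ∀ n, A' ≤ Ideal.span {y n} := by
      intro n
      rw [hbgen, Ideal.span_singleton_le_span_singleton]
      exact ⟨π ^ n, by rw [hy n]; ring⟩
    have hmono' : Monotone fun n => Ideal.span {y n} :=
      monotone_nat_of_le_succ hmono
    have hsm : StrictMono fun n => Ideal.span {y n} := by
      apply strictMono_nat_of_lt_succ
      intro n
      exact lt_of_le_of_ne (hmono n)
        (fun h => hstrict n (h ▸ Ideal.mem_span_singleton_self _))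
    have hfin : (Set.range fun n => Ideal.span {y n}).Finite := by
      refine hchain' _ hmono'.isChain_range ?_
      rintro _ ⟨n, rfl⟩
      exact ⟨hAy n, Ideal.span_le.mpr (Set.singleton_subset_iff.mpr (hyQ n))⟩
    exact (Set.infinite_range_of_injective hsm.injective) hfin
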